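/- Let H ⊆ L²(ℝ^d) be a Hilbert space of functions with norm ‖·‖_H and constant C₀ ≥ 1 such that ‖e^{i⟨·,ξ⟩}f(·−x)‖_H ≤ C₀‖f‖_H for all f ∈ H and x, ξ ∈ ℝ^d, and assume (x,ξ) ↦ ‖e^{i⟨·,ξ⟩}f(·−x)‖_H² is measurable for each f. Suppose N is a norm on H obtained as a pointwise limit N(f) = lim_k ‖f‖_{[R_k]} along a sequence R_k → ∞ of the averaged norms ‖f‖_{[R]}² = (2R)^{-2d}∫∫_{[-R,R]^{2d}} ‖e^{i⟨·,η⟩}f(·−y)‖_H² dy dη. Then N is invariant under all translations and modulations: N(e^{i⟨·,ξ⟩}f(·−x)) = N(f) for every f ∈ H and x, ξ ∈ ℝ^d. -/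

import Mathlib

open MeasureTheory Filter Topology Complex

/-- Time-frequency shift `e^{i⟨·,ξ⟩} f(· − x)` on functions `ℝ^d → ℂ`. -/
noncomputable def tfShift {d : ℕ} (x ξ : Fin d → ℝ) (f : (Fin d → ℝ) → ℂ) :
    (Fin d → ℝ) → ℂ :=
  fun y => Complex.exp (Complex.I * ((∑ i, y i * ξ i : ℝ) : ℂ)) * f (y - x)

/-- The cube `[-R,R]^n` in `ℝ^n`. -/
def cube (n : ℕ) (R : ℝ) : Set (Fin n → ℝ) := Set.univ.pi fun _ => Set.Icc (-R) R

lemma cube_measurable (n : ℕ) (R : ℝ) : MeasurableSet (cube n R) :=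
  MeasurableSet.univ_pi fun _ => measurableSet_Icc

lemma cube_volume (n : ℕ) (R : ℝ) : volume (cube n R) = (ENNReal.ofReal (2*R))^n := by
  rw [cube, volume_pi_pi]
  simp [Real.volume_Icc]
  ring_nf
  rw [ENNReal.ofReal_mul' (by norm_num), mul_pow, ENNReal.ofReal_ofNat]

lemma cube_sub_mem {n : ℕ} {R c : ℝ} (a : Fin n → ℝ)
    (ha : ∀ i, |a i| ≤ c) {p : Fin n → ℝ} (hp : p ∈ cube n (R - c)) :
    p - a ∈ cube n R := by
  intro i _
  have h1 := hp i (Set.mem_univ i)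
  simp only [Set.mem_Icc] at h1 ⊢
  have h2 := abs_le.mp (ha i)
  simp only [Pi.sub_apply]
  constructor <;> [linarith [h1.1, h2.2]; linarith [h1.2, h2.1]]

lemma cube_mem_of_le {n : ℕ} {R c : ℝ} (hc : 0 ≤ c) {p : Fin n → ℝ}
    (hp : p ∈ cube n (R - c)) : p ∈ cube n R := by
  intro i _
  have h1 := hp i (Set.mem_univ i)
  simp only [Set.mem_Icc] at h1 ⊢
  constructor <;> linarith [h1.1, h1.2]

lemma tfShift_comp {d : ℕ} (x ξ y η : Fin d → ℝ) (f : (Fin d → ℝ) → ℂ) :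
    tfShift y η (tfShift x ξ f) =
      Complex.exp (-(Complex.I * ((∑ i, y i * ξ i : ℝ) : ℂ))) • tfShift (y + x) (η + ξ) f := by
  funext t
  simp only [tfShift, Pi.smul_apply, smul_eq_mul]
  have harg : t - y - x = t - (y + x) := by rw [sub_sub]
  rw [harg, ← mul_assoc, ← mul_assoc, ← Complex.exp_add, ← Complex.exp_add]
  congr 2
  have h1 : (∑ i, (t - y) i * ξ i) = (∑ i, t i * ξ i) - (∑ i, y i * ξ i) := by
    rw [← Finset.sum_sub_distrib]
    exact Finset.sum_congr rfl fun i _ => by simp [sub_mul]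
  have h2 : (∑ i, t i * (η + ξ) i) = (∑ i, t i * η i) + (∑ i, t i * ξ i) := by
    rw [← Finset.sum_add_distrib]
    exact Finset.sum_congr rfl fun i _ => by simp [mul_add]
  rw [h1, h2]
  push_cast
  ring

instance volume_prod_right_invariant {d : ℕ} :
    (volume : Measure ((Fin d → ℝ) × (Fin d → ℝ))).IsAddRightInvariant := by
  rw [MeasureTheory.Measure.volume_eq_prod]; infer_instance

theorem stmt7 {d : ℕ} (H : Submodule ℂ ((Fin d → ℝ) → ℂ))
    (hL2 : ∀ f ∈ H, MemLp f 2 (volume : Measure (Fin d → ℝ)))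
    (N : ((Fin d → ℝ) → ℂ) → ℝ)
    (hzero : ∀ f ∈ H, (N f = 0 ↔ f = 0))
    (hsmul : ∀ (c : ℂ), ∀ f ∈ H, N (c • f) = ‖c‖ * N f)
    (hadd : ∀ f ∈ H, ∀ g ∈ H, N (f + g) ≤ N f + N g)
    (hpar : ∀ f ∈ H, ∀ g ∈ H,
      N (f + g) ^ 2 + N (f - g) ^ 2 = 2 * N f ^ 2 + 2 * N g ^ 2)
    (hmem : ∀ (x ξ : Fin d → ℝ), ∀ f ∈ H, tfShift x ξ f ∈ H)
    (C₀ : ℝ) (hC₀ : 1 ≤ C₀)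
    (hbound : ∀ (x ξ : Fin d → ℝ), ∀ f ∈ H, N (tfShift x ξ f) ≤ C₀ * N f)
    (hmeas : ∀ f ∈ H, Measurable fun q : (Fin d → ℝ) × (Fin d → ℝ) =>
      N (tfShift q.1 q.2 f) ^ 2)
    (NR : ℝ → ((Fin d → ℝ) → ℂ) → ℝ)
    (hNR : ∀ (R : ℝ) (f : (Fin d → ℝ) → ℂ), NR R f = Real.sqrt
      ((((2 * R) ^ (2 * d) : ℝ))⁻¹ *
        ∫ q in (cube d R) ×ˢ (cube d R), N (tfShift q.1 q.2 f) ^ 2))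
    (Rseq : ℕ → ℝ) (hRseq1 : ∀ k, 1 ≤ Rseq k)
    (hRseq : Tendsto Rseq atTop atTop)
    (Nlim : ((Fin d → ℝ) → ℂ) → ℝ)
    (hNlim : ∀ f ∈ H, Tendsto (fun k => NR (Rseq k) f) atTop (𝓝 (Nlim f))) :
    ∀ f ∈ H, ∀ (x ξ : Fin d → ℝ), Nlim (tfShift x ξ f) = Nlim f := by
  -- `N` is nonnegative on `H`
  have hN0 : N 0 = 0 := (hzero 0 H.zero_mem).2 rfl
  have hNnn : ∀ f ∈ H, 0 ≤ N f := by
    intro f hf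
    have h1 : N ((-1 : ℂ) • f) = ‖(-1 : ℂ)‖ * N f := hsmul _ f hf
    have h2 := hadd f hf ((-1 : ℂ) • f) (H.smul_mem _ hf)
    have h3 : f + (-1 : ℂ) • f = 0 := by funext t; simp
    rw [h3, hN0] at h2
    simp only [norm_neg, norm_one, one_mul] at h1
    linarith
  intro f hf x ξ
  have hgH : tfShift x ξ f ∈ H := hmem x ξ f hf
  set g := tfShift x ξ f with hgdef
  -- key pointwise identity
  have key : ∀ y η : Fin d → ℝ, N (tfShift y η g) = N (tfShift (y + x) (η + ξ) f) := by
    intro y η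
    rw [hgdef, tfShift_comp, hsmul _ _ (hmem _ _ f hf)]
    have hn : ‖Complex.exp (-(Complex.I * ((∑ i, y i * ξ i : ℝ) : ℂ)))‖ = 1 := by
      rw [Complex.norm_exp]
      simp
    rw [hn, one_mul]
  -- constants
  set c : ℝ := ‖x‖ + ‖ξ‖ with hcdef
  have hxabs : ∀ i, |x i| ≤ c := fun i => by
    have := norm_le_pi_norm x i
    rw [Real.norm_eq_abs] at this
    have : |x i| ≤ ‖x‖ := this
    have h2 : (0:ℝ) ≤ ‖ξ‖ := norm_nonneg _
    linarith
  have hξabs : ∀ i, |ξ i| ≤ c := fun i => by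
    have := norm_le_pi_norm ξ i
    rw [Real.norm_eq_abs] at this
    have h2 : (0:ℝ) ≤ ‖x‖ := norm_nonneg _
    linarith
  have hc0 : 0 ≤ c := add_nonneg (norm_nonneg _) (norm_nonneg _)
  set M : ℝ := (C₀ * N f) ^ 2 with hMdef
  have hM0 : 0 ≤ M := sq_nonneg _
  have hφle : ∀ q : (Fin d → ℝ) × (Fin d → ℝ), N (tfShift q.1 q.2 f) ^ 2 ≤ M := by
    intro q
    exact pow_le_pow_left₀ (hNnn _ (hmem q.1 q.2 f hf)) (hbound q.1 q.2 f hf) 2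
  have hφm : Measurable fun q : (Fin d → ℝ) × (Fin d → ℝ) => N (tfShift q.1 q.2 f) ^ 2 :=
    hmeas f hf
  -- main estimate for each large R
  have main : ∀ R : ℝ, 1 ≤ R → c ≤ R →
      |NR R g ^ 2 - NR R f ^ 2| ≤ 2 * M * (1 - ((R - c) / R) ^ (2 * d)) := by
    intro R hR1 hRc
    have hRpos : (0:ℝ) < R := lt_of_lt_of_le one_pos hR1
    set φ : (Fin d → ℝ) × (Fin d → ℝ) → ℝ := fun q => N (tfShift q.1 q.2 f) ^ 2 with hφdef
    set S : Set ((Fin d → ℝ) × (Fin d → ℝ)) := (cube d R) ×ˢ (cube d R) with hSdef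
    set S' : Set ((Fin d → ℝ) × (Fin d → ℝ)) := (fun p : (Fin d → ℝ) × (Fin d → ℝ) => p - (x, ξ)) ⁻¹' S with hS'def
    have hSm : MeasurableSet S := (cube_measurable d R).prod (cube_measurable d R)
    have hS'm : MeasurableSet S' := (measurable_sub_const (x, ξ)) hSm
    have hSvol : volume S = (ENNReal.ofReal (2*R)) ^ (2*d) := by
      rw [hSdef, MeasureTheory.Measure.volume_eq_prod, Measure.prod_prod, cube_volume,
        ← pow_add, ← two_mul]
    have hSfin : volume S ≠ ⊤ := by
      rw [hSvol]; exact ENNReal.pow_ne_top ENNReal.ofReal_ne_top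
    have hS'vol : volume S' = volume S :=
      (measurePreserving_sub_right volume ((x, ξ) : (Fin d → ℝ) × (Fin d → ℝ))).measure_preimage
        hSm.nullMeasurableSet
    have hS'fin : volume S' ≠ ⊤ := by rw [hS'vol]; exact hSfin
    set T : Set ((Fin d → ℝ) × (Fin d → ℝ)) := S ∩ S' with hTdef
    have hTm : MeasurableSet T := hSm.inter hS'm
    have hTS : T ⊆ S := Set.inter_subset_left
    have hTS' : T ⊆ S' := Set.inter_subset_right
    have hTfin : volume T ≠ ⊤ := fun h => hSfin (top_le_iff.mp (h ▸ measure_mono hTS))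
    -- lower bound for the volume of T
    have hsmall : (cube d (R - c)) ×ˢ (cube d (R - c)) ⊆ T := by
      rintro ⟨p₁, p₂⟩ hp
      rw [Set.mem_prod] at hp
      constructor
      · rw [hSdef, Set.mem_prod]
        exact ⟨cube_mem_of_le hc0 hp.1, cube_mem_of_le hc0 hp.2⟩
      · rw [hS'def, Set.mem_preimage]
        have hsub : ((p₁, p₂) : (Fin d → ℝ) × (Fin d → ℝ)) - (x, ξ) = (p₁ - x, p₂ - ξ) := rfl
        rw [hsub, hSdef, Set.mem_prod]
        exact ⟨cube_sub_mem x hxabs hp.1, cube_sub_mem ξ hξabs hp.2⟩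
    have hTvol : (ENNReal.ofReal (2*(R-c))) ^ (2*d) ≤ volume T := by
      calc (ENNReal.ofReal (2*(R-c))) ^ (2*d)
          = volume ((cube d (R - c)) ×ˢ (cube d (R - c))) := by
            rw [MeasureTheory.Measure.volume_eq_prod, Measure.prod_prod, cube_volume,
              ← pow_add, ← two_mul]
        _ ≤ volume T := measure_mono hsmall
    -- integrability
    have hφae : AEStronglyMeasurable φ (volume : Measure ((Fin d → ℝ) × (Fin d → ℝ))) :=
      hφm.aestronglyMeasurable
    have hintS : IntegrableOn φ S volume := by
      apply Measure.integrableOn_of_bounded hSfin hφae (M := M)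
      filter_upwards with q
      simp only [hφdef, Real.norm_eq_abs]
      rw [_root_.abs_of_nonneg (sq_nonneg _)]
      exact hφle q
    have hintS' : IntegrableOn φ S' volume := by
      apply Measure.integrableOn_of_bounded hS'fin hφae (M := M)
      filter_upwards with q
      simp only [hφdef, Real.norm_eq_abs]
      rw [_root_.abs_of_nonneg (sq_nonneg _)]
      exact hφle q
    have hintT : IntegrableOn φ T volume := hintS.mono_set hTS
    -- change of variables
    have hIg : (∫ q in S, N (tfShift q.1 q.2 g) ^ 2) = ∫ p in S', φ p := by
      have cov := MeasurePreserving.setIntegral_preimage_emb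
        (measurePreserving_add_right volume ((x, ξ) : (Fin d → ℝ) × (Fin d → ℝ)))
        (measurableEmbedding_addRight ((x, ξ) : (Fin d → ℝ) × (Fin d → ℝ))) φ S'
      have hpre : (fun q : (Fin d → ℝ) × (Fin d → ℝ) => q + (x, ξ)) ⁻¹' S' = S := by
        ext q
        rw [hS'def]
        simp [Set.mem_preimage, add_sub_cancel_right]
      rw [hpre] at cov
      rw [← cov]
      apply setIntegral_congr_fun hSm
      intro q _
      show N (tfShift q.1 q.2 g) ^ 2 = φ (q + (x, ξ))
      rw [key q.1 q.2, hφdef]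
      rfl
    -- basic integral comparisons
    have hnn : 0 ≤ᵐ[(volume : Measure ((Fin d → ℝ) × (Fin d → ℝ))).restrict S] φ := by
      filter_upwards with q; exact sq_nonneg _
    have hnn' : 0 ≤ᵐ[(volume : Measure ((Fin d → ℝ) × (Fin d → ℝ))).restrict S'] φ := by
      filter_upwards with q; exact sq_nonneg _
    have hT_le_S : (∫ q in T, φ q) ≤ ∫ q in S, φ q :=
      setIntegral_mono_set hintS hnn (HasSubset.Subset.eventuallyLE hTS)
    have hT_le_S' : (∫ q in T, φ q) ≤ ∫ q in S', φ q :=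
      setIntegral_mono_set hintS' hnn' (HasSubset.Subset.eventuallyLE hTS')
    have hsplitS : (∫ q in S, φ q) = (∫ q in T, φ q) + ∫ q in S \ T, φ q := by
      rw [← setIntegral_union disjoint_sdiff_self_right (hSm.diff hTm) hintT
        (hintS.mono_set Set.diff_subset), Set.union_diff_cancel hTS]
    have hsplitS' : (∫ q in S', φ q) = (∫ q in T, φ q) + ∫ q in S' \ T, φ q := by
      rw [← setIntegral_union disjoint_sdiff_self_right (hS'm.diff hTm) hintT
        (hintS'.mono_set Set.diff_subset), Set.union_diff_cancel hTS']
    have hdiffbd : ∀ U : Set ((Fin d → ℝ) × (Fin d → ℝ)), MeasurableSet U → volume U ≠ ⊤ →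
        (∫ q in U, φ q) ≤ M * (volume U).toReal := by
      intro U hUm hUfin
      have hb0 : ‖∫ q in U, φ q‖ ≤ M * (volume U).toReal := by
        apply norm_setIntegral_le_of_norm_le_const (lt_top_iff_ne_top.mpr hUfin)
        intro q _
        simp only [hφdef, Real.norm_eq_abs]
        rw [_root_.abs_of_nonneg (sq_nonneg _)]
        exact hφle q
      rw [Real.norm_eq_abs] at hb0
      exact (le_abs_self _).trans hb0
    -- volume of differences
    have hvolS_toReal : (volume S).toReal = (2*R) ^ (2*d) := by
      rw [hSvol, ENNReal.toReal_pow, ENNReal.toReal_ofReal (by linarith)]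
    have hvolT_ge : (2*(R-c)) ^ (2*d) ≤ (volume T).toReal := by
      have h1 := ENNReal.toReal_mono hTfin hTvol
      rwa [ENNReal.toReal_pow, ENNReal.toReal_ofReal (by linarith)] at h1
    have hvolT_le : (volume T).toReal ≤ (volume S).toReal :=
      ENNReal.toReal_mono hSfin (measure_mono hTS)
    have hdiffvolS : (volume (S \ T)).toReal ≤ (2*R) ^ (2*d) - (2*(R-c)) ^ (2*d) := by
      rw [measure_diff hTS hTm.nullMeasurableSet hTfin,
        ENNReal.toReal_sub_of_le (measure_mono hTS) hSfin]
      rw [hvolS_toReal] at hvolT_le ⊢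
      linarith [hvolT_ge]
    have hdiffvolS' : (volume (S' \ T)).toReal ≤ (2*R) ^ (2*d) - (2*(R-c)) ^ (2*d) := by
      rw [measure_diff hTS' hTm.nullMeasurableSet hTfin,
        ENNReal.toReal_sub_of_le (measure_mono hTS') hS'fin, hS'vol]
      rw [hvolS_toReal] at hvolT_le ⊢
      linarith [hvolT_ge]
    -- putting the integral estimate together
    set D : ℝ := (2*R) ^ (2*d) - (2*(R-c)) ^ (2*d) with hDdef
    have hIbound : |(∫ q in S', φ q) - ∫ q in S, φ q| ≤ 2 * M * D := by
      have b1 : (∫ q in S \ T, φ q) ≤ M * D := by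
        calc (∫ q in S \ T, φ q) ≤ M * (volume (S \ T)).toReal :=
              hdiffbd _ (hSm.diff hTm) (fun h => hSfin
                (top_le_iff.mp (h ▸ measure_mono Set.diff_subset)))
          _ ≤ M * D := mul_le_mul_of_nonneg_left hdiffvolS hM0
      have b2 : (∫ q in S' \ T, φ q) ≤ M * D := by
        calc (∫ q in S' \ T, φ q) ≤ M * (volume (S' \ T)).toReal :=
              hdiffbd _ (hS'm.diff hTm) (fun h => hS'fin
                (top_le_iff.mp (h ▸ measure_mono Set.diff_subset)))
          _ ≤ M * D := mul_le_mul_of_nonneg_left hdiffvolS' hM0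
      have n1 : (0:ℝ) ≤ ∫ q in S \ T, φ q :=
        setIntegral_nonneg (hSm.diff hTm) fun q _ => sq_nonneg _
      have n2 : (0:ℝ) ≤ ∫ q in S' \ T, φ q :=
        setIntegral_nonneg (hS'm.diff hTm) fun q _ => sq_nonneg _
      rw [abs_sub_le_iff]
      constructor <;> [skip; skip] <;> nlinarith [hsplitS, hsplitS', b1, b2, n1, n2]
    -- express NR squared
    have hNRf2 : NR R f ^ 2 = (((2 * R) ^ (2 * d) : ℝ))⁻¹ * ∫ q in S, φ q := by
      rw [hNR, Real.sq_sqrt]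
      apply mul_nonneg (inv_nonneg.mpr (by positivity))
      exact setIntegral_nonneg hSm fun q _ => sq_nonneg _
    have hNRg2 : NR R g ^ 2 = (((2 * R) ^ (2 * d) : ℝ))⁻¹ * ∫ q in S', φ q := by
      rw [hNR, Real.sq_sqrt, hIg]
      apply mul_nonneg (inv_nonneg.mpr (by positivity))
      exact setIntegral_nonneg hSm fun q _ => sq_nonneg _
    have hpospow : (0:ℝ) < (2 * R) ^ (2 * d) := by positivity
    have hfinal : |NR R g ^ 2 - NR R f ^ 2| ≤ (((2 * R) ^ (2 * d) : ℝ))⁻¹ * (2 * M * D) := by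
      rw [hNRf2, hNRg2, ← mul_sub, abs_mul, _root_.abs_of_nonneg (inv_nonneg.mpr hpospow.le)]
      exact mul_le_mul_of_nonneg_left hIbound (inv_nonneg.mpr hpospow.le)
    refine hfinal.trans (le_of_eq ?_)
    -- algebra
    rw [hDdef]
    have e1 : ((2:ℝ)*R) ^ (2*d) = 2 ^ (2*d) * R ^ (2*d) := mul_pow 2 R (2*d)
    have e2 : ((2:ℝ)*(R-c)) ^ (2*d) = 2 ^ (2*d) * (R-c) ^ (2*d) := mul_pow 2 (R-c) (2*d)
    have e3 : (((R:ℝ) - c) / R) ^ (2*d) = (R-c) ^ (2*d) / R ^ (2*d) := div_pow (R-c) R (2*d)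
    rw [e1, e2, e3]
    have hRne : (R:ℝ) ^ (2*d) ≠ 0 := pow_ne_zero _ (ne_of_gt hRpos)
    have h2ne : ((2:ℝ)) ^ (2*d) ≠ 0 := pow_ne_zero _ two_ne_zero
    field_simp
  -- limits
  have ha := hNlim f hf
  have hb := hNlim g hgH
  have hsub : Tendsto (fun k => NR (Rseq k) g ^ 2 - NR (Rseq k) f ^ 2) atTop
      (𝓝 (Nlim g ^ 2 - Nlim f ^ 2)) := (hb.pow 2).sub (ha.pow 2)
  have hu : Tendsto (fun k => (Rseq k - c) / Rseq k) atTop (𝓝 1) := by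
    have hne : ∀ k, Rseq k ≠ 0 := fun k => ne_of_gt (lt_of_lt_of_le one_pos (hRseq1 k))
    have heq : ∀ k, (Rseq k - c) / Rseq k = 1 - c / Rseq k := by
      intro k; rw [sub_div, div_self (hne k)]
    have hcz : Tendsto (fun k => c / Rseq k) atTop (𝓝 0) :=
      Tendsto.div_atTop tendsto_const_nhds hRseq
    have h4 : Tendsto (fun k => (1:ℝ) - c / Rseq k) atTop (𝓝 (1 - 0)) :=
      tendsto_const_nhds.sub hcz
    rw [sub_zero] at h4
    exact h4.congr fun k => (heq k).symm
  have hεlim : Tendsto (fun k => 2 * M * (1 - ((Rseq k - c) / Rseq k) ^ (2*d))) atTop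
      (𝓝 0) := by
    have h1 : Tendsto (fun k => ((Rseq k - c) / Rseq k) ^ (2*d)) atTop (𝓝 1) := by
      have := hu.pow (2*d)
      rwa [one_pow] at this
    have h2 := (tendsto_const_nhds (x := (1:ℝ))).sub h1
    rw [sub_self] at h2
    have h3 := (tendsto_const_nhds (x := 2*M)).mul h2
    rwa [mul_zero] at h3
  have hzero' : Tendsto (fun k => NR (Rseq k) g ^ 2 - NR (Rseq k) f ^ 2) atTop (𝓝 0) := by
    apply squeeze_zero_norm' ?_ hεlim
    filter_upwards [hRseq.eventually_ge_atTop c] with k hk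
    rw [Real.norm_eq_abs]
    exact main (Rseq k) (hRseq1 k) hk
  have heq2 : Nlim g ^ 2 - Nlim f ^ 2 = 0 := tendsto_nhds_unique hsub hzero'
  have hfn : 0 ≤ Nlim f :=
    le_of_tendsto_of_tendsto' tendsto_const_nhds ha fun k => by
      rw [hNR]; exact Real.sqrt_nonneg _
  have hgn : 0 ≤ Nlim g :=
    le_of_tendsto_of_tendsto' tendsto_const_nhds hb fun k => by
      rw [hNR]; exact Real.sqrt_nonneg _
  calc Nlim g = Real.sqrt (Nlim g ^ 2) := (Real.sqrt_sq hgn).symm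
    _ = Real.sqrt (Nlim f ^ 2) := by rw [show Nlim g ^ 2 = Nlim f ^ 2 by linarith]
    _ = Nlim f := Real.sqrt_sq hfn
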